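/- Let G(t; r, ρ, ζ) = (4√π t^{3/2})⁻¹ exp(-(r² + ρ² + ζ²)/(4t)) I₁(rρ/(2t)) for t, r, ρ > 0 and ζ ∈ ℝ. Then for each fixed r > 0 and t > 0, ∫_{-∞}^{∞} ∫_0^∞ |∂_ζ G(t; r, ρ, ζ)| dρ dζ ≤ (C/(r√t))(1 - e^{-r²/(4t)}) for some absolute constant C. -/

import Mathlib

open Real MeasureTheory

lemma exp_tsum_shift (x : ℝ) : ∑' m : ℕ, x ^ (m+1) / (m+1).factorial = Real.exp x - 1 := by
  have h : Real.exp x = ∑' n : ℕ, x ^ n / n.factorial := by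
    rw [Real.exp_eq_exp_ℝ, NormedSpace.exp_eq_tsum_div]
  have hs : Summable (fun n : ℕ => x ^ n / n.factorial) := Real.summable_pow_div_factorial x
  rw [hs.tsum_eq_zero_add] at h
  simp only [pow_zero, Nat.factorial_zero, Nat.cast_one, div_one] at h
  linarith

lemma mom (n : ℕ) {b : ℝ} (hb : 0 < b) :
    ∫ x in Set.Ioi (0:ℝ), x ^ (2*n+1) * Real.exp (-b * x^2)
      = n.factorial / (2 * b^(n+1)) := by
  have h := integral_rpow_mul_exp_neg_mul_rpow (p := 2) (q := (2*n+1 : ℝ))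
    two_pos (by have := n.cast_nonneg (α := ℝ); linarith) hb
  rw [show ∫ x in Set.Ioi (0:ℝ), x ^ (2*n+1) * Real.exp (-b * x^2)
      = ∫ x in Set.Ioi (0:ℝ), x ^ ((2*n+1 : ℝ)) * Real.exp (-b * x ^ (2:ℝ)) from
    setIntegral_congr_fun measurableSet_Ioi (fun x hx => by
      rw [Real.rpow_two, show ((2*n+1 : ℝ)) = ((2*n+1 : ℕ) : ℝ) by push_cast; ring,
        Real.rpow_natCast])]
  rw [h, show (-(2*(n:ℝ)+1+1)/2) = -(((n+1:ℕ)):ℝ) by push_cast; ring,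
    show ((2*(n:ℝ)+1+1)/2) = ((n:ℝ)+1) by ring,
    Real.Gamma_nat_eq_factorial, Real.rpow_neg hb.le, Real.rpow_natCast]
  ring

/-- The modified Bessel function of the first kind of order 1,
`I₁(x) = ∑_{m=0}^∞ (1/(m!(m+1)!)) (x/2)^{2m+1}`. -/
noncomputable def besselI1 (x : ℝ) : ℝ :=
  ∑' m : ℕ, (1 / (Nat.factorial m * Nat.factorial (m + 1)) : ℝ) * (x / 2) ^ (2 * m + 1)

/-- The heat kernel of `∂_t - (Δ - 1/r²)` in the axially symmetric setting. -/
noncomputable def G (t r ρ ζ : ℝ) : ℝ :=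
  (4 * Real.sqrt π * t ^ ((3 : ℝ) / 2))⁻¹ *
    Real.exp (-(r ^ 2 + ρ ^ 2 + ζ ^ 2) / (4 * t)) * besselI1 (r * ρ / (2 * t))

lemma besselI1_nonneg {x : ℝ} (hx : 0 ≤ x) : 0 ≤ besselI1 x :=
  tsum_nonneg fun m => by positivity

lemma term_integrable (m : ℕ) {b : ℝ} (hb : 0 < b) :
    IntegrableOn (fun x : ℝ => x ^ (2*m+1) * Real.exp (-b * x^2)) (Set.Ioi 0) := by
  refine (integrableOn_rpow_mul_exp_neg_mul_sq hb (s := (2*m+1 : ℝ))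
    (by have := m.cast_nonneg (α := ℝ); linarith)).congr_fun ?_ measurableSet_Ioi
  intro x hx
  simp only
  rw [show ((2*(m:ℝ)+1)) = ((2*m+1 : ℕ) : ℝ) by push_cast; ring, Real.rpow_natCast]

lemma key {b c : ℝ} (hb : 0 < b) (hc : 0 < c) :
    ∫ x in Set.Ioi (0:ℝ), Real.exp (-b*x^2) * besselI1 (c*x)
      = (Real.exp (c^2/(4*b)) - 1) / c := by
  set u : ℝ := c^2/(4*b) with hu
  set A : ℕ → ℝ := fun m => (1 / (Nat.factorial m * Nat.factorial (m + 1)) : ℝ) * (c/2) ^ (2*m+1)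
    with hA
  set f : ℕ → ℝ → ℝ := fun m x => A m * (x ^ (2*m+1) * Real.exp (-b * x^2)) with hf
  have hK : ∀ m : ℕ, A m * ((m.factorial : ℝ) / (2 * b^(m+1)))
      = (1/c) * (u^(m+1) / (m+1).factorial) := by
    intro m
    have h4 : (4:ℝ) = 2^2 := by norm_num
    rw [hA, hu, h4]
    have hfm : (m.factorial : ℝ) ≠ 0 := by positivity
    have hfm1 : (((m+1).factorial : ℕ) : ℝ) ≠ 0 := by positivity
    field_simp
    ring_nf
    have hb0 : b ≠ 0 := hb.ne'
    have e : b * b^m * b⁻¹ * b⁻¹^m = 1 := by rw [inv_pow]; field_simp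
    have h2 : ((1:ℝ)/2)^(m*2) = (1/4)^m := by rw [mul_comm, pow_mul]; norm_num
    linear_combination (c^2 * c^(m*2) * (1/2)) * h2 + (-(c^2 * c^(m*2) * (1/4)^m * (1/2))) * e
  have hApos : ∀ m, 0 ≤ A m := fun m => by positivity
  have hSum : Summable (fun m : ℕ => (1/c) * (u^(m+1) / (m+1).factorial)) := by
    refine Summable.mul_left _ ?_
    exact ((summable_nat_add_iff 1).2 (Real.summable_pow_div_factorial u))
  have hInt : ∀ m : ℕ, IntegrableOn (f m) (Set.Ioi 0) := fun m =>
    ((term_integrable m hb).const_mul (A m))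
  have hIval : ∀ m : ℕ, ∫ x in Set.Ioi (0:ℝ), f m x = (1/c) * (u^(m+1) / (m+1).factorial) := by
    intro m
    rw [hf]
    simp only
    rw [MeasureTheory.integral_const_mul, mom m hb, hK m]
  -- pointwise identity
  have hpt : ∀ x : ℝ, 0 < x → Real.exp (-b*x^2) * besselI1 (c*x) = ∑' m, f m x := by
    intro x hx
    rw [besselI1, ← tsum_mul_left]
    congr 1; funext m
    rw [hf, hA]
    simp only
    rw [show c*x/2 = (c/2)*x by ring, mul_pow]
    ring
  rw [setIntegral_congr_fun measurableSet_Ioi (fun x hx => hpt x hx)]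
  rw [MeasureTheory.integral_tsum (fun m => ((hInt m).aestronglyMeasurable))]
  · rw [tsum_congr hIval, tsum_mul_left, exp_tsum_shift, one_div, inv_mul_eq_div]
  · -- summability of lintegrals
    have : ∀ m : ℕ, ∫⁻ x in Set.Ioi (0:ℝ), ‖f m x‖ₑ
        = ENNReal.ofReal ((1/c) * (u^(m+1) / (m+1).factorial)) := by
      intro m
      rw [← MeasureTheory.ofReal_integral_norm_eq_lintegral_enorm (hInt m)]
      congr 1
      rw [← hIval m]
      refine setIntegral_congr_fun measurableSet_Ioi (fun x hx => ?_)
      rw [Real.norm_eq_abs, abs_of_nonneg]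
      have : (0:ℝ) < x := hx
      positivity
    rw [tsum_congr this, ← ENNReal.ofReal_tsum_of_nonneg (fun m => by positivity) hSum]
    exact ENNReal.ofReal_ne_top

lemma G_deriv (t r ρ ζ : ℝ) :
    deriv (fun ζ' => G t r ρ ζ') ζ = -(ζ/(2*t)) * G t r ρ ζ := by
  have h0 : HasDerivAt (fun ζ' : ℝ => ζ'^2) (2*ζ) ζ := by simpa using hasDerivAt_pow 2 ζ
  have h1 : HasDerivAt (fun ζ' : ℝ => -(r^2+ρ^2+ζ'^2)/(4*t)) (-(2*ζ)/(4*t)) ζ :=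
    ((h0.const_add (r^2+ρ^2)).neg).div_const (4*t)
  have h2 := (h1.exp.const_mul ((4*Real.sqrt π*t^((3:ℝ)/2))⁻¹)).mul_const
    (besselI1 (r*ρ/(2*t)))
  simp only [G]
  rw [h2.deriv]
  ring

theorem stmt13 :
    ∃ C : ℝ, 0 < C ∧ ∀ r t : ℝ, 0 < r → 0 < t →
      ∫ ζ : ℝ, ∫ ρ in Set.Ioi (0 : ℝ), |deriv (fun ζ' => G t r ρ ζ') ζ|
        ≤ C / (r * Real.sqrt t) * (1 - Real.exp (-r ^ 2 / (4 * t))) := by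
  refine ⟨1, one_pos, fun r t hr ht => ?_⟩
  have ht4 : (0:ℝ) < 1/(4*t) := by positivity
  have hc : (0:ℝ) < r/(2*t) := by positivity
  have hκ : (0:ℝ) < (4 * Real.sqrt π * t ^ ((3:ℝ)/2))⁻¹ := by
    have := Real.rpow_pos_of_pos ht ((3:ℝ)/2)
    have := Real.sqrt_pos.2 Real.pi_pos
    positivity
  set κ : ℝ := (4 * Real.sqrt π * t ^ ((3:ℝ)/2))⁻¹ with hκdef
  set D : ℝ := κ * (1/(2*t)) * Real.exp (-r^2/(4*t)) *
      ((Real.exp (r^2/(4*t)) - 1) / (r/(2*t))) with hD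
  have hGsplit : ∀ ρ ζ : ℝ, G t r ρ ζ = (κ * Real.exp (-(r^2+ζ^2)/(4*t))) *
      (Real.exp (-(1/(4*t)) * ρ^2) * besselI1 ((r/(2*t)) * ρ)) := by
    intro ρ ζ
    simp only [G, ← hκdef]
    rw [show -(r^2+ρ^2+ζ^2)/(4*t) = -(r^2+ζ^2)/(4*t) + (-(1/(4*t)) * ρ^2) by
      field_simp; ring, Real.exp_add, show r*ρ/(2*t) = (r/(2*t))*ρ by ring]
    ring
  have hinner : ∀ ζ : ℝ, ∫ ρ in Set.Ioi (0:ℝ), |deriv (fun ζ' => G t r ρ ζ') ζ|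
      = D * (|ζ| * Real.exp (-(1/(4*t)) * ζ^2)) := by
    intro ζ
    have hpt : ∀ ρ ∈ Set.Ioi (0:ℝ), |deriv (fun ζ' => G t r ρ ζ') ζ|
        = ((|ζ| * (1/(2*t))) * (κ * Real.exp (-(r^2+ζ^2)/(4*t)))) *
          (Real.exp (-(1/(4*t)) * ρ^2) * besselI1 ((r/(2*t)) * ρ)) := by
      intro ρ hρ
      have hρ0 : (0:ℝ) < ρ := hρ
      have hb1 : 0 ≤ besselI1 ((r/(2*t)) * ρ) := besselI1_nonneg (by positivity)
      rw [G_deriv, abs_mul, hGsplit ρ ζ, abs_of_nonneg (by positivity :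
        (0:ℝ) ≤ (κ * Real.exp (-(r^2+ζ^2)/(4*t))) *
          (Real.exp (-(1/(4*t)) * ρ^2) * besselI1 ((r/(2*t)) * ρ))),
        abs_neg, abs_div, abs_of_pos (by positivity : (0:ℝ) < 2*t)]
      ring
    rw [setIntegral_congr_fun measurableSet_Ioi hpt, MeasureTheory.integral_const_mul,
      key ht4 hc,
      show ((r/(2*t))^2/(4*(1/(4*t)))) = r^2/(4*t) by field_simp; ring,
      show -(r^2+ζ^2)/(4*t) = -r^2/(4*t) + (-(1/(4*t)) * ζ^2) by field_simp; ring,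
      Real.exp_add, hD]
    ring
  rw [MeasureTheory.integral_congr_ae (Filter.Eventually.of_forall hinner),
    MeasureTheory.integral_const_mul]
  have habs : ∫ ζ : ℝ, |ζ| * Real.exp (-(1/(4*t)) * ζ^2) = 4*t := by
    have h := integral_comp_abs
      (f := fun x : ℝ => x * Real.exp (-(1/(4*t)) * x^2))
    simp only [sq_abs] at h
    rw [h]
    have h0 := mom 0 ht4
    simp only [pow_one, Nat.factorial_zero, Nat.cast_one, mul_zero, zero_add,
      pow_one] at h0
    rw [h0]
    field_simp
  rw [habs]
  have hexp : Real.exp (-r^2/(4*t)) * (Real.exp (r^2/(4*t)) - 1)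
      = 1 - Real.exp (-r^2/(4*t)) := by
    rw [mul_sub, ← Real.exp_add, mul_one]
    ring_nf
    rw [Real.exp_zero]
  have hts : t ^ ((3:ℝ)/2) = t * Real.sqrt t := by
    rw [show (3:ℝ)/2 = 1 + 1/2 by norm_num, Real.rpow_add ht, Real.rpow_one,
      Real.sqrt_eq_rpow]
  have hπ1 : (1:ℝ) ≤ Real.sqrt π := by
    rw [show (1:ℝ) = Real.sqrt 1 by simp]
    exact Real.sqrt_le_sqrt (by linarith [Real.pi_gt_three])
  have hπ0 : (0:ℝ) < Real.sqrt π := by linarith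
  have hst : (0:ℝ) < Real.sqrt t := Real.sqrt_pos.2 ht
  have heq : D * (4*t) = (Real.sqrt π)⁻¹ / (r * Real.sqrt t)
      * (1 - Real.exp (-r^2/(4*t))) := by
    rw [hD, ← hexp, hκdef, hts]
    field_simp
  rw [heq]
  have hle1 : 1 - Real.exp (-r^2/(4*t)) ≥ 0 := by
    have : Real.exp (-r^2/(4*t)) ≤ 1 := by
      rw [← Real.exp_zero]
      exact Real.exp_le_exp.2 (div_nonpos_of_nonpos_of_nonneg (by nlinarith) (by positivity))
    linarith
  have h2 : (Real.sqrt π)⁻¹ ≤ 1 := by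
    rw [inv_le_one_iff₀]; right; exact hπ1
  gcongr
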